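/- Let n be even, let X, T, X', T' ∈ {0,1}^* with (X,T) ≠ (X',T') and |X|, |T|, |X'|, |T'| < 2^{n/2}, and let D ∈ {0,1}^n be arbitrary. If h is chosen uniformly at random from {0,1}^n, then Pr[ H_h(X,T) ⊕ H_h(X',T') = D ] ≤ ℓ / 2^n, where ℓ = max{ m+p+1, m'+p'+1 } is the maximum of the degrees of H_h(X,T) and H_h(X',T') as polynomials in h (m, p and m', p' being the respective numbers of parsed blocks of X, T and X', T'). -/

import Mathlib

/-- Integer represented by a bit string (msb-first). -/
def bitsToNat : List Bool → ℕ
  | [] => 0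
  | b :: t => (if b then 2 ^ t.length else 0) + bitsToNat t

/-- An `n`-bit block from a bit string of length at most `n` (msb-first). -/
def blockToBV (n : ℕ) (l : List Bool) : BitVec n := BitVec.ofNat n (bitsToNat l)

/-- `pad`: append zeros on the right to get a full `n`-bit block. -/
def padBlock (n : ℕ) (l : List Bool) : BitVec n :=
  blockToBV n (l ++ List.replicate (n - l.length) false)

/-- `parse_n` followed by padding of the last block. -/
def blocksOf (n : ℕ) (Z : List Bool) : List (BitVec n) :=
  (Z.toChunks n).map (padBlock n)

/-- Number of `n`-bit blocks obtained from parsing `Z`. -/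
def numBlocks (n : ℕ) (Z : List Bool) : ℕ := (Z.toChunks n).length

/-- The length block `bin_{n/2}(|X|) ‖ bin_{n/2}(|T|)`. -/
def xcbLenBlock (n : ℕ) (X T : List Bool) : BitVec n :=
  BitVec.ofNat n (X.length * 2 ^ (n / 2) + T.length)

/-- The XCB hash `H_h(X,T) = X₁h^{m+p+1} ⊕ ⋯ ⊕ pad(X_m)h^{p+2} ⊕ T₁h^{p+1} ⊕ ⋯ ⊕
pad(T_p)h² ⊕ (bin_{n/2}(|X|)‖bin_{n/2}(|T|))h`, computed by Horner evaluation,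
where the equivalence `ι` identifies `{0,1}ⁿ` with `GF(2ⁿ)` (XOR = addition). -/
def xcbHash {n : ℕ} {F : Type*} [Field F] (ι : BitVec n ≃ F) (h : F)
    (X T : List Bool) : F :=
  ((blocksOf n X ++ blocksOf n T).map ι ++ [ι (xcbLenBlock n X T)]).foldl
    (fun acc c => (acc + c) * h) 0


def chunksP {α : Type*} (k : ℕ) : List α → List (List α)
  | [] => []
  | x :: xs => (x :: xs.take k) :: chunksP k (xs.drop k)
termination_by l => l.length
decreasing_by simp [List.length_drop] <;> omega

theorem toChunks_go_spec {α : Type*} (k : ℕ) : ∀ (xs : List α) (a₁ : Array α)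
    (a₂ : Array (List α)), 0 < a₁.size → a₁.size ≤ k + 1 →
    List.toChunks.go (k+1) xs a₁ a₂ = a₂.toList ++ chunksP k (a₁.toList ++ xs)
  | [], a₁, a₂, h1, h2 => by
    rw [← Array.length_toList] at h1 h2
    obtain ⟨y, ys, hys⟩ : ∃ y ys, a₁.toList = y :: ys := by
      rcases h : a₁.toList with _ | ⟨y, ys⟩
      · rw [h] at h1; simp at h1
      · exact ⟨_, _, rfl⟩
    rw [hys] at h2; simp at h2
    simp [List.toChunks.go, hys, chunksP, List.take_of_length_le h2,
      List.drop_eq_nil_of_le h2]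
  | x :: xs, a₁, a₂, h1, h2 => by
    rw [List.toChunks.go]
    by_cases hsz : a₁.size = k + 1
    · simp only [hsz, beq_self_eq_true, if_true]
      rw [toChunks_go_spec k xs _ _ (by simp) (by simp)]
      obtain ⟨y, ys, hys⟩ : ∃ y ys, a₁.toList = y :: ys := by
        rw [← Array.length_toList] at h1
        rcases h : a₁.toList with _ | ⟨y, ys⟩
        · rw [h] at h1; simp at h1
        · exact ⟨_, _, rfl⟩
      have hlen : ys.length = k := by
        have h3 := congrArg List.length hys
        rw [Array.length_toList, hsz] at h3
        simp at h3; omega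
      have hstep : chunksP k (a₁.toList ++ x :: xs) = a₁.toList :: chunksP k (x :: xs) := by
        rw [hys, show (y :: ys) ++ x :: xs = y :: (ys ++ x :: xs) by simp, chunksP]
        rw [List.take_append_of_le_length (le_of_eq hlen.symm),
          List.drop_append_of_le_length (le_of_eq hlen.symm)]
        simp [← hlen]
      simp [hstep]
    · have hb : (a₁.size == k + 1) = false := by simp [hsz]
      simp only [hb, if_false]
      rw [toChunks_go_spec k xs (a₁.push x) a₂ (by simp) (by simp; omega)]
      simp

theorem toChunks_eq_chunksP {α : Type*} (k : ℕ) (l : List α) :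
    l.toChunks (k+1) = chunksP k l := by
  rcases l with _ | ⟨x, xs⟩
  · simp [List.toChunks, chunksP]
  · rw [show List.toChunks (k+1) (x::xs) = List.toChunks.go (k+1) xs #[x] #[] by
      simp [List.toChunks]]
    rw [toChunks_go_spec k xs #[x] #[] (by simp) (by simp)]
    simp

theorem bitsToNat_lt (l : List Bool) : bitsToNat l < 2 ^ l.length := by
  induction l with
  | nil => simp [bitsToNat]
  | cons b t ih =>
    simp only [bitsToNat, List.length_cons, pow_succ]
    split <;> omega

theorem bitsToNat_inj : ∀ (a b : List Bool), a.length = b.length →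
    bitsToNat a = bitsToNat b → a = b
  | [], [], _, _ => rfl
  | x :: xs, y :: ys, hl, hv => by
    simp only [List.length_cons] at hl
    have hx := bitsToNat_lt xs
    have hy := bitsToNat_lt ys
    simp only [bitsToNat] at hv
    have hll : xs.length = ys.length := by omega
    rw [hll] at hx hv
    have hxy : x = y := by
      rcases x <;> rcases y <;> simp_all <;> omega
    subst hxy
    have := bitsToNat_inj xs ys hll (by rcases x <;> simp_all)
    rw [this]

theorem bitsToNat_append (a b : List Bool) :
    bitsToNat (a ++ b) = bitsToNat a * 2 ^ b.length + bitsToNat b := by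
  induction a with
  | nil => simp [bitsToNat]
  | cons x xs ih =>
    simp only [List.cons_append, bitsToNat, List.append_eq, ih,
      List.length_append, pow_add]
    split <;> ring

theorem bitsToNat_replicate_false (m : ℕ) : bitsToNat (List.replicate m false) = 0 := by
  induction m with
  | zero => rfl
  | succ m ih => simp [List.replicate, bitsToNat, ih]

theorem padBlock_inj (m : ℕ) (l l' : List Bool) (hll' : l.length = l'.length)
    (hl : l.length ≤ m) (h : padBlock m l = padBlock m l') : l = l' := by
  unfold padBlock blockToBV at h
  have e1 : bitsToNat (l ++ List.replicate (m - l.length) false)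
      = bitsToNat l * 2 ^ (m - l.length) := by
    rw [bitsToNat_append, bitsToNat_replicate_false, List.length_replicate]; ring
  have e2 : bitsToNat (l' ++ List.replicate (m - l'.length) false)
      = bitsToNat l' * 2 ^ (m - l'.length) := by
    rw [bitsToNat_append, bitsToNat_replicate_false, List.length_replicate]; ring
  have lt1 : bitsToNat l * 2 ^ (m - l.length) < 2 ^ m := by
    calc bitsToNat l * 2 ^ (m - l.length) < 2 ^ l.length * 2 ^ (m - l.length) := by
          exact (Nat.mul_lt_mul_right (Nat.two_pow_pos _)).mpr (bitsToNat_lt l)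
      _ = 2 ^ m := by rw [← pow_add]; congr 1; omega
  have lt2 : bitsToNat l' * 2 ^ (m - l'.length) < 2 ^ m := by
    calc bitsToNat l' * 2 ^ (m - l'.length) < 2 ^ l'.length * 2 ^ (m - l'.length) := by
          exact (Nat.mul_lt_mul_right (Nat.two_pow_pos _)).mpr (bitsToNat_lt l')
      _ = 2 ^ m := by rw [← pow_add]; congr 1; omega
  have := congrArg BitVec.toNat h
  rw [BitVec.toNat_ofNat, BitVec.toNat_ofNat, e1, e2,
    Nat.mod_eq_of_lt lt1, Nat.mod_eq_of_lt lt2, ← hll'] at this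
  exact bitsToNat_inj l l' hll'
    (Nat.eq_of_mul_eq_mul_right (Nat.two_pow_pos _) this)

theorem chunksP_length_congr {α β : Type*} (k : ℕ) : ∀ (Z : List α) (Z' : List β),
    Z.length = Z'.length → (chunksP k Z).length = (chunksP k Z').length
  | [], [], _ => by rw [chunksP, chunksP]; rfl
  | x :: xs, y :: ys, h => by
    simp only [List.length_cons] at h
    rw [chunksP, chunksP]
    simp only [List.length_cons]
    rw [chunksP_length_congr k (xs.drop k) (ys.drop k) (by simp only [List.length_drop]; omega)]
termination_by Z => Z.length
decreasing_by simp [List.length_drop] <;> omega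

theorem chunksP_map_pad_inj (k : ℕ) : ∀ (Z Z' : List Bool), Z.length = Z'.length →
    (chunksP k Z).map (padBlock (k+1)) = (chunksP k Z').map (padBlock (k+1)) →
    Z = Z'
  | [], [], _, _ => rfl
  | x :: xs, y :: ys, hl, hb => by
    simp only [List.length_cons] at hl
    rw [chunksP, chunksP] at hb
    simp only [List.map_cons, List.cons.injEq] at hb
    have hhead : (x :: xs.take k) = (y :: ys.take k) := by
      refine padBlock_inj (k+1) _ _ ?_ ?_ hb.1
      · simp only [List.length_cons, List.length_take]; omega
      · simp only [List.length_cons, List.length_take]; omega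
    have htail : xs.drop k = ys.drop k :=
      chunksP_map_pad_inj k (xs.drop k) (ys.drop k) (by simp only [List.length_drop]; omega) hb.2
    have : xs = ys := by
      rw [← List.take_append_drop k xs, ← List.take_append_drop k ys, htail]
      simp only [List.cons.injEq] at hhead
      rw [hhead.2]
    rw [this, List.cons.injEq]
    simp only [List.cons.injEq] at hhead
    exact ⟨hhead.1, rfl⟩
termination_by Z => Z.length
decreasing_by simp [List.length_drop] <;> omega


open Polynomial

noncomputable def hornerPoly {F : Type*} [Field F] (L : List F) : F[X] :=
  L.foldl (fun a c => (a + C c) * X) 0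

theorem hornerPoly_eval {F : Type*} [Field F] (h : F) : ∀ (L : List F) (acc : F[X]),
    (L.foldl (fun a c => (a + C c) * X) acc).eval h
      = L.foldl (fun a c => (a + c) * h) (acc.eval h)
  | [], acc => rfl
  | c :: L, acc => by
    rw [List.foldl_cons, List.foldl_cons, hornerPoly_eval h L]
    simp

theorem hornerPoly_natDegree_le {F : Type*} [Field F] : ∀ (L : List F) (acc : F[X]),
    ((L.foldl (fun a c => (a + C c) * X) acc).natDegree) ≤ acc.natDegree + L.length
  | [], acc => by simp
  | c :: L, acc => by
    rw [List.foldl_cons]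
    refine le_trans (hornerPoly_natDegree_le L _) ?_
    have : ((acc + C c) * X).natDegree ≤ acc.natDegree + 1 := by
      refine le_trans (natDegree_mul_le) ?_
      simp only [natDegree_X]
      have := natDegree_add_le acc (C c)
      simp only [natDegree_C] at this
      omega
    simp only [List.length_cons]
    omega

theorem hornerPoly_coeff_zero {F : Type*} [Field F] : ∀ (L : List F) (acc : F[X]),
    acc.coeff 0 = 0 → (L.foldl (fun a c => (a + C c) * X) acc).coeff 0 = 0
  | [], acc, h => h
  | c :: L, acc, h => by
    rw [List.foldl_cons]
    exact hornerPoly_coeff_zero L _ (by simp [coeff_mul_X_zero])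

theorem hornerPoly_concat {F : Type*} [Field F] (L : List F) (c : F) :
    hornerPoly (L ++ [c]) = (hornerPoly L + C c) * X := by
  simp [hornerPoly]

theorem hornerPoly_coeff_zero' {F : Type*} [Field F] (L : List F) :
    (hornerPoly L).coeff 0 = 0 :=
  hornerPoly_coeff_zero L 0 (by simp)

theorem hornerPoly_coeff_one {F : Type*} [Field F] (L : List F) (c : F) :
    (hornerPoly (L ++ [c])).coeff 1 = c := by
  rw [hornerPoly_concat, coeff_mul_X, coeff_add, coeff_C, hornerPoly_coeff_zero']
  simp

theorem hornerPoly_inj {F : Type*} [Field F] : ∀ (L1 L2 : List F),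
    L1.length = L2.length → hornerPoly L1 = hornerPoly L2 → L1 = L2 := by
  intro L1
  induction L1 using List.reverseRecOn with
  | nil =>
    intro L2 hl _
    exact (List.eq_nil_of_length_eq_zero hl.symm).symm
  | append_singleton M1 c1 ih =>
    intro L2 hl hp
    rcases L2.eq_nil_or_concat with rfl | ⟨M2, c2, rfl⟩
    · simp at hl
    · simp only [List.concat_eq_append] at hl hp ⊢
      have hc : c1 = c2 := by
        have := congrArg (fun p => Polynomial.coeff p 1) hp
        simpa [hornerPoly_coeff_one] using this
      subst hc
      rw [hornerPoly_concat, hornerPoly_concat] at hp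
      have hM : hornerPoly M1 = hornerPoly M2 := by
        have := mul_right_cancel₀ (X_ne_zero (R := F)) hp
        exact add_right_cancel this
      have hlen : M1.length = M2.length := by
        simp only [List.length_append, List.length_cons] at hl; omega
      rw [ih M2 hlen hM]

open Polynomial in
/-- For distinct inputs `(X,T) ≠ (X',T')` and any `D ∈ {0,1}ⁿ`, a uniformly random
hash key `h` satisfies `Pr[H_h(X,T) ⊕ H_h(X',T') = D] ≤ ℓ/2ⁿ`, where `ℓ` is the maximum
of the degrees of the two hash values as polynomials in `h`. -/
theorem xcbHash_diff_prob (n : ℕ) (hn : 0 < n) (hEven : Even n)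
    (F : Type*) [Field F] (ι : BitVec n ≃ F)
    (hι : ∀ x y : BitVec n, ι (x ^^^ y) = ι x + ι y)
    (X T X' T' : List Bool) (hne : (X, T) ≠ (X', T'))
    (hX : X.length < 2 ^ (n / 2)) (hT : T.length < 2 ^ (n / 2))
    (hX' : X'.length < 2 ^ (n / 2)) (hT' : T'.length < 2 ^ (n / 2))
    (D : BitVec n)
    (ℓ : ℕ) (hℓ : ℓ = max (numBlocks n X + numBlocks n T + 1)
      (numBlocks n X' + numBlocks n T' + 1)) :
    (Nat.card {hk : BitVec n //
        xcbHash ι (ι hk) X T + xcbHash ι (ι hk) X' T' = ι D} : ℝ) / ((2 : ℝ) ^ n) ≤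
      (ℓ : ℝ) / ((2 : ℝ) ^ n) := by
  classical
  obtain ⟨k, hk⟩ : ∃ k, n = k + 1 := ⟨n - 1, by omega⟩
  -- basic facts about ι and characteristic 2
  have hι0 : ι (0#n) = 0 := by
    have := hι (0#n) (0#n)
    simp only [BitVec.xor_self] at this
    exact left_eq_add.mp this
  have hchar : ∀ a : F, a + a = 0 := by
    intro a
    have h1 := hι (ι.symm a) (ι.symm a)
    rw [BitVec.xor_self, Equiv.apply_symm_apply, hι0] at h1
    exact h1.symm
  have h2F : (1 : F) + 1 = 0 := hchar 1
  -- the coefficient lists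
  set L1 : List F := (blocksOf n X ++ blocksOf n T).map ι ++ [ι (xcbLenBlock n X T)]
    with hL1
  set L2 : List F := (blocksOf n X' ++ blocksOf n T').map ι ++ [ι (xcbLenBlock n X' T')]
    with hL2
  set Q : F[X] := hornerPoly L1 + hornerPoly L2 + C (ι D) with hQ
  have hL1len : L1.length = numBlocks n X + numBlocks n T + 1 := by
    simp [hL1, blocksOf, numBlocks]
    try omega
  have hL2len : L2.length = numBlocks n X' + numBlocks n T' + 1 := by
    simp [hL2, blocksOf, numBlocks]
    try omega
  -- degree bound
  have hQdeg : Q.natDegree ≤ ℓ := by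
    have d1 : (hornerPoly L1).natDegree ≤ ℓ := by
      refine le_trans (hornerPoly_natDegree_le L1 0) ?_
      simp only [natDegree_zero, zero_add, hL1len, hℓ]
      exact le_max_left _ _
    have d2 : (hornerPoly L2).natDegree ≤ ℓ := by
      refine le_trans (hornerPoly_natDegree_le L2 0) ?_
      simp only [natDegree_zero, zero_add, hL2len, hℓ]
      exact le_max_right _ _
    refine le_trans (natDegree_add_le _ _) ?_
    simp only [natDegree_C, max_le_iff]
    refine ⟨le_trans (natDegree_add_le _ _) ?_, by omega⟩
    exact max_le d1 d2
  -- polynomial char-2 helper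
  have hcharP : ∀ p : F[X], p + p = 0 := by
    intro p
    calc p + p = (1 + 1) * p := by ring
    _ = 0 := by rw [show (1 + 1 : F[X]) = C (1 + 1) by simp, h2F, C_0, zero_mul]
  -- Q is nonzero
  have hQne : Q ≠ 0 := by
    intro h0
    rw [hQ] at h0
    have hD0 : ι D = 0 := by
      have := congrArg (fun p => Polynomial.coeff p 0) h0
      simpa [hornerPoly_coeff_zero', coeff_C] using this
    have hPP : hornerPoly L1 = hornerPoly L2 := by
      have hsum : hornerPoly L1 + hornerPoly L2 = 0 := by
        rw [hD0, C_0, add_zero] at h0; exact h0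
      calc hornerPoly L1 = hornerPoly L1 + (hornerPoly L2 + hornerPoly L2) := by
            rw [hcharP, add_zero]
      _ = (hornerPoly L1 + hornerPoly L2) + hornerPoly L2 := by ring
      _ = hornerPoly L2 := by rw [hsum, zero_add]
    -- from coefficient 1: length blocks agree
    have hlenb : xcbLenBlock n X T = xcbLenBlock n X' T' := by
      have := congrArg (fun p => Polynomial.coeff p 1) hPP
      simp only [hL1, hL2, hornerPoly_coeff_one] at this
      exact ι.injective this
    -- extract lengths
    have hhalf : 2 ^ (n / 2) * 2 ^ (n / 2) = 2 ^ n := by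
      rw [← pow_add]
      congr 1
      obtain ⟨m, hm⟩ := hEven
      omega
    have hval : X.length * 2 ^ (n / 2) + T.length
        = X'.length * 2 ^ (n / 2) + T'.length := by
      have h1 : X.length * 2 ^ (n / 2) + T.length < 2 ^ n := by
        have : X.length * 2 ^ (n / 2) ≤ (2 ^ (n / 2) - 1) * 2 ^ (n / 2) :=
          Nat.mul_le_mul_right _ (by omega)
        have hp : 0 < 2 ^ (n / 2) := Nat.two_pow_pos _
        nlinarith [hhalf]
      have h2 : X'.length * 2 ^ (n / 2) + T'.length < 2 ^ n := by
        have : X'.length * 2 ^ (n / 2) ≤ (2 ^ (n / 2) - 1) * 2 ^ (n / 2) :=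
          Nat.mul_le_mul_right _ (by omega)
        have hp : 0 < 2 ^ (n / 2) := Nat.two_pow_pos _
        nlinarith [hhalf]
      have := congrArg BitVec.toNat hlenb
      rwa [xcbLenBlock, xcbLenBlock, BitVec.toNat_ofNat, BitVec.toNat_ofNat,
        Nat.mod_eq_of_lt h1, Nat.mod_eq_of_lt h2] at this
    have hTlen : T.length = T'.length := by
      have a1 : (X.length * 2 ^ (n / 2) + T.length) % 2 ^ (n / 2) = T.length := by
        rw [mul_comm, Nat.mul_add_mod]; exact Nat.mod_eq_of_lt hT
      rw [hval, mul_comm X'.length, Nat.mul_add_mod, Nat.mod_eq_of_lt hT'] at a1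
      exact a1.symm
    have hXlen : X.length = X'.length := by
      have a1 : (X.length * 2 ^ (n / 2) + T.length) / 2 ^ (n / 2) = X.length := by
        rw [mul_comm, Nat.mul_add_div (Nat.two_pow_pos _), Nat.div_eq_of_lt hT, add_zero]
      rw [hval, mul_comm, Nat.mul_add_div (Nat.two_pow_pos _), Nat.div_eq_of_lt hT',
        add_zero] at a1
      exact a1.symm
    -- numbers of blocks agree
    have hnbX : numBlocks n X = numBlocks n X' := by
      unfold numBlocks
      rw [hk, toChunks_eq_chunksP, toChunks_eq_chunksP]
      exact chunksP_length_congr k X X' hXlen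
    have hnbT : numBlocks n T = numBlocks n T' := by
      unfold numBlocks
      rw [hk, toChunks_eq_chunksP, toChunks_eq_chunksP]
      exact chunksP_length_congr k T T' hTlen
    -- coefficient lists agree
    have hLL : L1 = L2 := hornerPoly_inj L1 L2
      (by rw [hL1len, hL2len, hnbX, hnbT]) hPP
    have hbl : ∀ Z : List Bool, (blocksOf n Z).length = numBlocks n Z := by
      intro Z; simp [blocksOf, numBlocks]
    have hbX : blocksOf n X = blocksOf n X' ∧ blocksOf n T = blocksOf n T' := by
      have hA : (blocksOf n X ++ blocksOf n T).map ι
          = (blocksOf n X' ++ blocksOf n T').map ι := by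
        refine (List.append_inj hLL ?_).1
        simp only [List.length_map, List.length_append, hbl]
        omega
      rw [List.map_append, List.map_append] at hA
      have hlen1 : ((blocksOf n X).map ι).length = ((blocksOf n X').map ι).length := by
        simp only [List.length_map, hbl, hnbX]
      obtain ⟨e1, e2⟩ := List.append_inj hA hlen1
      have hιinj : Function.Injective (List.map (α := BitVec n) ι) :=
        List.map_injective_iff.mpr ι.injective
      exact ⟨hιinj e1, hιinj e2⟩
    have hXX : X = X' := by
      refine chunksP_map_pad_inj k X X' hXlen ?_
      have := hbX.1
      rwa [blocksOf, blocksOf, hk, toChunks_eq_chunksP, toChunks_eq_chunksP] at this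
    have hTT : T = T' := by
      refine chunksP_map_pad_inj k T T' hTlen ?_
      have := hbX.2
      rwa [blocksOf, blocksOf, hk, toChunks_eq_chunksP, toChunks_eq_chunksP] at this
    exact hne (by rw [hXX, hTT])
  -- the counting argument
  have key : Nat.card {hk : BitVec n //
      xcbHash ι (ι hk) X T + xcbHash ι (ι hk) X' T' = ι D} ≤ ℓ := by
    have hroot : ∀ hk : BitVec n,
        xcbHash ι (ι hk) X T + xcbHash ι (ι hk) X' T' = ι D →
        (ι hk) ∈ Q.roots.toFinset := by
      intro hk hhk
      rw [Multiset.mem_toFinset, mem_roots hQne]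
      have e1 : Q.eval (ι hk) = xcbHash ι (ι hk) X T + xcbHash ι (ι hk) X' T' + ι D := by
        simp only [hQ, eval_add, eval_C]
        congr 1
        congr 1
        · rw [show (hornerPoly L1).eval (ι hk)
              = (L1.foldl (fun a c => (a + C c) * Polynomial.X) 0).eval (ι hk) from rfl,
            hornerPoly_eval]
          simp [xcbHash, hL1]
        · rw [show (hornerPoly L2).eval (ι hk)
              = (L2.foldl (fun a c => (a + C c) * Polynomial.X) 0).eval (ι hk) from rfl,
            hornerPoly_eval]
          simp [xcbHash, hL2]
      rw [IsRoot.def, e1, hhk, hchar]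
    set S := {hk : BitVec n //
      xcbHash ι (ι hk) X T + xcbHash ι (ι hk) X' T' = ι D}
    let f : S → {z // z ∈ Q.roots.toFinset} := fun s => ⟨ι s.1, hroot s.1 s.2⟩
    have hf : Function.Injective f := by
      intro a b hab
      have : ι a.1 = ι b.1 := congrArg Subtype.val hab
      exact Subtype.ext (ι.injective this)
    calc Nat.card S ≤ Nat.card {z // z ∈ Q.roots.toFinset} :=
          Nat.card_le_card_of_injective f hf
    _ = Q.roots.toFinset.card := Nat.card_eq_finsetCard _
    _ ≤ Multiset.card Q.roots := Multiset.toFinset_card_le _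
    _ ≤ Q.natDegree := Polynomial.card_roots' Q
    _ ≤ ℓ := hQdeg
  have hpos : (0 : ℝ) < (2 : ℝ) ^ n := by positivity
  gcongr
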